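/- The double-time limit defining the quantum Wiener covariance: for bounded continuous J with J(Ω) defined, lim_{λ→0} (1/λ²) ∫₀ᵗ dτ ∫₀^{t'} dτ' ∫_ℝ dω (J(ω)/2π) e^{-i(ω-Ω)(τ-τ')/λ²} = J(Ω)·min{t, t'}, under the hypothesis that J is continuous, integrable, with integrable Fourier transform. -/

import Mathlib

open Filter MeasureTheory Real Complex intervalIntegral

/-- The double-time van Hove limit defining the quantum Wiener covariance:
`(1/λ²)∫₀ᵗ∫₀^{t'} ∫ (J(ω)/2π) e^{-i(ω-Ω)(τ-τ')/λ²} dω dτ' dτ → J(Ω)·min(t,t')`. -/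
theorem van_hove_wiener_covariance_limit
    (J : ℝ → ℝ) (hJc : Continuous J) (hJi : Integrable J)
    (hJf : Integrable (FourierTransform.fourier (fun x => (J x : ℂ))))
    (Ω : ℝ) (t t' : ℝ) (ht : 0 ≤ t) (ht' : 0 ≤ t') :
    Tendsto
      (fun lam : ℝ => (1 / lam ^ 2 : ℂ) *
        ∫ τ in (0 : ℝ)..t, ∫ τ' in (0 : ℝ)..t', ∫ ω : ℝ,
          ((J ω : ℂ) / (2 * Real.pi))
            * Complex.exp (-Complex.I * (ω - Ω) * (τ - τ') / lam ^ 2))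
      (nhdsWithin 0 (Set.Ioi 0))
      (nhds ((J Ω : ℂ) * (min t t' : ℝ))) := by
  have hπ : (0 : ℝ) < 2 * Real.pi := by positivity
  set g : ℝ → ℂ := FourierTransform.fourier (fun x => (J x : ℂ)) with hgdef
  set h : ℝ → ℂ := fun s =>
    Complex.exp (Complex.I * Ω * s) / (2 * Real.pi) * g (s / (2 * Real.pi)) with hhdef
  -- the inner ω-integral computes to `h`
  have key : ∀ s : ℝ, (∫ ω : ℝ, ((J ω : ℂ) / (2 * Real.pi))
      * Complex.exp (-Complex.I * (ω - Ω) * s)) = h s := by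
    intro s
    have e1 : ∀ ω : ℝ, ((J ω : ℂ) / (2 * Real.pi)) * Complex.exp (-Complex.I * (ω - Ω) * s)
        = (Complex.exp (Complex.I * Ω * s) / (2 * Real.pi)) *
          (Complex.exp (((-2 * Real.pi * ω * (s / (2 * Real.pi)) : ℝ) : ℂ) * Complex.I)
            • (J ω : ℂ)) := by
      intro ω
      have e0 : (-2 * Real.pi * ω * (s / (2 * Real.pi)) : ℝ) = -(ω * s) := by
        field_simp
      have e2 : Complex.exp (Complex.I * Ω * s) * Complex.exp ((-(ω * s) : ℝ) * Complex.I)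
          = Complex.exp (-Complex.I * (ω - Ω) * s) := by
        rw [← Complex.exp_add]; congr 1; push_cast; ring
      rw [e0, smul_eq_mul, ← mul_assoc, ← e2]; push_cast; ring
    calc (∫ ω : ℝ, ((J ω : ℂ) / (2 * Real.pi)) * Complex.exp (-Complex.I * (ω - Ω) * s))
        = ∫ ω : ℝ, (Complex.exp (Complex.I * Ω * s) / (2 * Real.pi)) *
            (Complex.exp (((-2 * Real.pi * ω * (s / (2 * Real.pi)) : ℝ) : ℂ) * Complex.I)
              • (J ω : ℂ)) := by simp_rw [e1]
      _ = (Complex.exp (Complex.I * Ω * s) / (2 * Real.pi)) *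
            ∫ ω : ℝ, Complex.exp (((-2 * Real.pi * ω * (s / (2 * Real.pi)) : ℝ) : ℂ) * Complex.I)
              • (J ω : ℂ) := integral_const_mul _ _
      _ = h s := by
          rw [← Real.fourier_real_eq_integral_exp_smul (fun x => (J x : ℂ))]
  -- integrability and total integral of h
  have hgint : Integrable (fun s : ℝ => g (s / (2 * Real.pi))) := hJf.comp_div hπ.ne'
  have hh_int : Integrable h := by
    refine hgint.bdd_mul (c := 1 / (2 * Real.pi)) (Continuous.aestronglyMeasurable ?_) (ae_of_all _ fun s => ?_)
    · exact Continuous.div_const (by fun_prop) _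
    · rw [norm_div]
      have : ‖Complex.exp (Complex.I * Ω * s)‖ = 1 := by
        rw [Complex.norm_exp]
        simp
      rw [this]
      gcongr
      have : ((2 : ℂ) * Real.pi) = ((2 * Real.pi : ℝ) : ℂ) := by push_cast; ring
      rw [this, Complex.norm_real, Real.norm_of_nonneg hπ.le]
  have hinv : (∫ ξ : ℝ, Complex.exp (((2 * Real.pi * (ξ * Ω) : ℝ) : ℂ) * Complex.I) • g ξ)
      = (J Ω : ℂ) := by
    have hfi : Integrable (fun x : ℝ => (J x : ℂ)) := hJi.ofReal
    have hc : ContinuousAt (fun x : ℝ => (J x : ℂ)) Ω :=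
      (Complex.continuous_ofReal.comp hJc).continuousAt
    have := hfi.fourierInv_fourier_eq hJf hc
    rw [← this, Real.fourierInv_eq']
    simp [RCLike.inner_apply, mul_comm, hgdef]
  have hh_sum : (∫ s : ℝ, h s) = (J Ω : ℂ) := by
    have hfun : ∀ s : ℝ, h s = ((2 * Real.pi)⁻¹ : ℝ) •
        (fun ξ : ℝ => Complex.exp (((2 * Real.pi * (ξ * Ω) : ℝ) : ℂ) * Complex.I) • g ξ)
          (s / (2 * Real.pi)) := by
      intro s
      have e3 : Complex.I * (Ω : ℂ) * (s : ℂ)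
          = ((2 * Real.pi * ((s / (2 * Real.pi)) * Ω) : ℝ) : ℂ) * Complex.I := by
        have : (2 * Real.pi * ((s / (2 * Real.pi)) * Ω) : ℝ) = Ω * s := by
          field_simp
        rw [this]; push_cast; ring
      simp only [hhdef, smul_eq_mul, Complex.real_smul, e3]
      push_cast
      field_simp
    calc (∫ s : ℝ, h s)
        = ∫ s : ℝ, ((2 * Real.pi)⁻¹ : ℝ) •
            (fun ξ : ℝ => Complex.exp (((2 * Real.pi * (ξ * Ω) : ℝ) : ℂ) * Complex.I) • g ξ)
              (s / (2 * Real.pi)) := by simp_rw [← hfun]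
      _ = ((2 * Real.pi)⁻¹ : ℝ) • ∫ s : ℝ,
            (fun ξ : ℝ => Complex.exp (((2 * Real.pi * (ξ * Ω) : ℝ) : ℂ) * Complex.I) • g ξ)
              (s / (2 * Real.pi)) := integral_smul _ _
      _ = ((2 * Real.pi)⁻¹ : ℝ) • (|2 * Real.pi| • ∫ ξ : ℝ,
            Complex.exp (((2 * Real.pi * (ξ * Ω) : ℝ) : ℂ) * Complex.I) • g ξ) := by
          rw [MeasureTheory.Measure.integral_comp_div
            (fun ξ : ℝ => Complex.exp (((2 * Real.pi * (ξ * Ω) : ℝ) : ℂ) * Complex.I) • g ξ)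
            (2 * Real.pi)]
      _ = (J Ω : ℂ) := by
          rw [hinv, abs_of_pos hπ, smul_smul, inv_mul_cancel₀ hπ.ne', one_smul]
  -- primitive of h
  set P : ℝ → ℂ := fun x => ∫ u in (0 : ℝ)..x, h u with hPdef
  have hP_cont : Continuous P :=
    intervalIntegral.continuous_primitive (fun a b => hh_int.intervalIntegrable) 0
  set F : ℝ → ℝ → ℂ := fun lam τ => P (τ / lam ^ 2) - P ((τ - t') / lam ^ 2) with hFdef
  have hF_eq : ∀ lam τ : ℝ, F lam τ = ∫ u in ((τ - t') / lam ^ 2)..(τ / lam ^ 2), h u :=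
    fun lam τ => intervalIntegral.integral_interval_sub_left
      hh_int.intervalIntegrable hh_int.intervalIntegrable
  -- dominated convergence
  have hM : Integrable (fun u : ℝ => ‖h u‖) := hh_int.norm
  have main : Tendsto (fun lam : ℝ => ∫ τ in Set.Ioc 0 t, F lam τ)
      (nhdsWithin 0 (Set.Ioi 0))
      (nhds (∫ τ in Set.Ioc 0 t, Set.indicator (Set.Iio t') (fun _ => (J Ω : ℂ)) τ)) := by
    apply MeasureTheory.tendsto_integral_filter_of_dominated_convergence (fun _ => ∫ u : ℝ, ‖h u‖)
    · refine Eventually.of_forall fun lam => Continuous.aestronglyMeasurable ?_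
      exact (hP_cont.comp (continuous_id.div_const _)).sub
        (hP_cont.comp ((continuous_id.sub continuous_const).div_const _))
    · refine Eventually.of_forall fun lam => ae_of_all _ fun τ => ?_
      rw [hF_eq]
      refine intervalIntegral.norm_integral_le_integral_norm_uIoc.trans ?_
      exact setIntegral_le_integral hM (Eventually.of_forall fun u => norm_nonneg _)
    · exact integrableOn_const measure_Ioc_lt_top.ne
    · have h1 : ∀ᵐ τ ∂(volume.restrict (Set.Ioc 0 t)), τ ∈ Set.Ioc 0 t :=
        ae_restrict_mem measurableSet_Ioc
      have h2 : ∀ᵐ τ : ℝ ∂(volume.restrict (Set.Ioc 0 t)), τ ≠ t' := by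
        refine ae_restrict_of_ae ?_
        rw [ae_iff]
        simp [measure_singleton]
      filter_upwards [h1, h2] with τ hτ hτne
      have hτ0 : 0 < τ := hτ.1
      have hsq : Tendsto (fun lam : ℝ => (lam ^ 2)⁻¹) (nhdsWithin 0 (Set.Ioi 0)) atTop := by
        apply tendsto_inv_nhdsGT_zero.comp
        refine tendsto_nhdsWithin_of_tendsto_nhds_of_eventually_within _ ?_ ?_
        · exact ((continuous_pow 2).tendsto' 0 0 (by norm_num)).mono_left nhdsWithin_le_nhds
        · exact eventually_mem_nhdsWithin.mono fun x hx => Set.mem_Ioi.mpr (pow_pos hx 2)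
      have hb : Tendsto (fun lam : ℝ => τ / lam ^ 2) (nhdsWithin 0 (Set.Ioi 0)) atTop := by
        simp_rw [div_eq_mul_inv]
        exact hsq.const_mul_atTop hτ0
      rcases lt_or_gt_of_ne hτne with hlt | hgt
      · have ha : Tendsto (fun lam : ℝ => (τ - t') / lam ^ 2)
            (nhdsWithin 0 (Set.Ioi 0)) atBot := by
          simp_rw [div_eq_mul_inv]
          exact hsq.const_mul_atTop_of_neg (by linarith)
        have := MeasureTheory.intervalIntegral_tendsto_integral hh_int ha hb
        rw [Set.indicator_of_mem (show τ ∈ Set.Iio t' from hlt), ← hh_sum]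
        exact this.congr fun lam => (hF_eq lam τ).symm
      · have ha : Tendsto (fun lam : ℝ => (τ - t') / lam ^ 2)
            (nhdsWithin 0 (Set.Ioi 0)) atTop := by
          simp_rw [div_eq_mul_inv]
          exact hsq.const_mul_atTop (by linarith)
        have l1 := MeasureTheory.intervalIntegral_tendsto_integral_Ioi 0 hh_int.integrableOn hb
        have l2 := MeasureTheory.intervalIntegral_tendsto_integral_Ioi 0 hh_int.integrableOn ha
        have := l1.sub l2
        rw [Set.indicator_of_notMem (by simpa using hgt.le)]
        simpa using this
  -- identification of the limit value
  have hvol : volume (Set.Ioc 0 t ∩ Set.Iio t') = ENNReal.ofReal (min t t') := by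
    apply le_antisymm
    · calc volume (Set.Ioc 0 t ∩ Set.Iio t')
          ≤ volume (Set.Ioc 0 (min t t')) :=
            measure_mono fun x hx => ⟨hx.1.1, le_min hx.1.2 hx.2.le⟩
        _ = ENNReal.ofReal (min t t') := by rw [Real.volume_Ioc, sub_zero]
    · calc ENNReal.ofReal (min t t') = volume (Set.Ioo 0 (min t t')) := by
            rw [Real.volume_Ioo, sub_zero]
        _ ≤ volume (Set.Ioc 0 t ∩ Set.Iio t') := by
            refine measure_mono fun x hx => ?_
            exact ⟨⟨hx.1, hx.2.le.trans (min_le_left _ _)⟩,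
              lt_of_lt_of_le hx.2 (min_le_right _ _)⟩
  have hlim_eq : (∫ τ in Set.Ioc 0 t, Set.indicator (Set.Iio t') (fun _ => (J Ω : ℂ)) τ)
      = (J Ω : ℂ) * ((min t t' : ℝ) : ℂ) := by
    rw [setIntegral_indicator measurableSet_Iio, setIntegral_const, measureReal_def, hvol,
      ENNReal.toReal_ofReal (le_min ht ht'), Complex.real_smul, mul_comm]
  -- eventual identification of the original function with ∫ F
  have heq : (fun lam : ℝ => (1 / lam ^ 2 : ℂ) *
        ∫ τ in (0 : ℝ)..t, ∫ τ' in (0 : ℝ)..t', ∫ ω : ℝ,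
          ((J ω : ℂ) / (2 * Real.pi))
            * Complex.exp (-Complex.I * (ω - Ω) * (τ - τ') / lam ^ 2))
      =ᶠ[nhdsWithin 0 (Set.Ioi 0)] (fun lam => ∫ τ in Set.Ioc 0 t, F lam τ) := by
    filter_upwards [self_mem_nhdsWithin] with lam hlam
    have hlam0 : (0 : ℝ) < lam := hlam
    have hl2 : (0 : ℝ) < lam ^ 2 := pow_pos hlam0 2
    have step1 : ∀ τ τ' : ℝ, (∫ ω : ℝ, ((J ω : ℂ) / (2 * Real.pi))
        * Complex.exp (-Complex.I * (ω - Ω) * (τ - τ') / lam ^ 2))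
        = h ((τ - τ') / lam ^ 2) := by
      intro τ τ'
      rw [← key ((τ - τ') / lam ^ 2)]
      congr 1; funext ω; congr 2
      push_cast
      field_simp
    have step2 : ∀ τ : ℝ, (∫ τ' in (0 : ℝ)..t', h ((τ - τ') / lam ^ 2))
        = (lam ^ 2 : ℝ) • ∫ u in ((τ - t') / lam ^ 2)..(τ / lam ^ 2), h u := by
      intro τ
      rw [show (fun τ' : ℝ => h ((τ - τ') / lam ^ 2))
        = fun τ' : ℝ => (fun y => h (y / lam ^ 2)) (τ - τ') from rfl]
      rw [intervalIntegral.integral_comp_sub_left (fun y => h (y / lam ^ 2)) τ]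
      rw [intervalIntegral.integral_comp_div (f := h) hl2.ne', sub_zero]
    calc (1 / lam ^ 2 : ℂ) *
          ∫ τ in (0 : ℝ)..t, ∫ τ' in (0 : ℝ)..t', ∫ ω : ℝ,
            ((J ω : ℂ) / (2 * Real.pi))
              * Complex.exp (-Complex.I * (ω - Ω) * (τ - τ') / lam ^ 2)
        = (1 / lam ^ 2 : ℂ) * ∫ τ in (0 : ℝ)..t,
            (lam ^ 2 : ℝ) • ∫ u in ((τ - t') / lam ^ 2)..(τ / lam ^ 2), h u := by
          congr 1
          refine intervalIntegral.integral_congr fun τ _ => ?_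
          rw [← step2 τ]
          exact intervalIntegral.integral_congr fun τ' _ => step1 τ τ'
      _ = ∫ τ in (0 : ℝ)..t, ∫ u in ((τ - t') / lam ^ 2)..(τ / lam ^ 2), h u := by
          rw [intervalIntegral.integral_smul, Complex.real_smul, ← mul_assoc]
          have : (1 / (lam : ℂ) ^ 2) * ((lam ^ 2 : ℝ) : ℂ) = 1 := by
            push_cast
            field_simp
            exact div_self (Complex.ofReal_ne_zero.mpr hlam0.ne')
          rw [this, one_mul]
      _ = ∫ τ in Set.Ioc 0 t, F lam τ := by
          rw [intervalIntegral.integral_of_le ht]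
          exact setIntegral_congr_fun measurableSet_Ioc fun τ _ => (hF_eq lam τ).symm
  rw [show ((J Ω : ℂ) * ((min t t' : ℝ) : ℂ)) = _ from rfl] at hlim_eq
  exact Tendsto.congr' heq.symm (hlim_eq ▸ main)
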